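/- Let 0 < H < 1/2, T > 0, and let R_H(s,t) = (1/2)(s^{2H} + t^{2H} − |t−s|^{2H}) be the covariance function of fractional Brownian motion, whose partial derivative in s (for s ∈ (0,T), s ≠ t) is ∂R_H/∂s(s,t) = H ( s^{2H−1} − sgn(s−t)|s−t|^{2H−1} ). Then for every p with 1 ≤ p < 1/(1−2H), sup_{t ∈ [0,T]} ∫_0^T | ∂R_H/∂s(s,t) |^p ds < ∞. -/

import Mathlib

open MeasureTheory Real

/-- for `0 < H < 1/2`, `T > 0` and `1 ≤ p < 1/(1-2H)`, the partial derivative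
`∂R_H/∂s(s,t) = H (s^{2H-1} - sgn(s-t)|s-t|^{2H-1})` of the fBm covariance satisfies
`sup_{t ∈ [0,T]} ∫_0^T |∂R_H/∂s(s,t)|^p ds < ∞`. -/
theorem sup_integral_partial_cov_lt_top (H T p : ℝ) (hH0 : 0 < H) (hH : H < 1 / 2)
    (hT : 0 < T) (hp1 : 1 ≤ p) (hp2 : p < 1 / (1 - 2 * H)) :
    ∃ M : ℝ, ∀ t ∈ Set.Icc (0:ℝ) T,
      (∫⁻ s in Set.Ioo (0:ℝ) T,
        ENNReal.ofReal (|H * (s ^ (2 * H - 1) - Real.sign (s - t) * |s - t| ^ (2 * H - 1))| ^ p))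
        ≤ ENNReal.ofReal M := by
  have h2H : 0 < 1 - 2 * H := by linarith
  have hp0 : 0 < p := lt_of_lt_of_le one_pos hp1
  set q : ℝ := (2 * H - 1) * p with hqdef
  have hq1 : -1 < q := by
    have h := (lt_div_iff₀ h2H).mp hp2
    nlinarith
  have hq1' : 0 < q + 1 := by linarith
  have hC0 : (0:ℝ) ≤ (2 * H) ^ p := rpow_nonneg (by linarith) p
  refine ⟨(2 * H) ^ p * (3 * (T ^ (q + 1) / (q + 1))), fun t ht => ?_⟩
  obtain ⟨ht0, htT⟩ := ht
  set g : ℝ → ℝ := fun s => (2 * H) ^ p * (s ^ q + |s - t| ^ q) with hgdef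
  -- pointwise bound
  have hpt : ∀ s ∈ Set.Ioo (0:ℝ) T,
      ENNReal.ofReal (|H * (s ^ (2 * H - 1) - Real.sign (s - t) * |s - t| ^ (2 * H - 1))| ^ p)
        ≤ ENNReal.ofReal (g s) := by
    intro s hs
    apply ENNReal.ofReal_le_ofReal
    set a := s ^ (2 * H - 1) with ha
    set b := |s - t| ^ (2 * H - 1) with hb
    have ha0 : 0 ≤ a := rpow_nonneg hs.1.le _
    have hb0 : 0 ≤ b := rpow_nonneg (abs_nonneg _) _
    have hsign : |Real.sign (s - t)| ≤ 1 := by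
      rcases lt_trichotomy (s - t) 0 with h | h | h
      · rw [Real.sign_of_neg h]; norm_num
      · rw [h, Real.sign_zero]; norm_num
      · rw [Real.sign_of_pos h]; norm_num
    have hcb : |Real.sign (s - t) * b| ≤ b := by
      rw [abs_mul, abs_of_nonneg hb0]
      nlinarith [abs_nonneg (Real.sign (s - t))]
    have h1 : |H * (a - Real.sign (s - t) * b)| ≤ H * (a + b) := by
      rw [abs_mul, abs_of_pos hH0]
      have h2 : |a - Real.sign (s - t) * b| ≤ |a| + |Real.sign (s - t) * b| := abs_sub _ _
      rw [abs_of_nonneg ha0] at h2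
      nlinarith
    have h2 : |H * (a - Real.sign (s - t) * b)| ^ p ≤ (H * (a + b)) ^ p :=
      rpow_le_rpow (abs_nonneg _) h1 hp0.le
    have hmax0 : 0 ≤ max a b := le_max_of_le_left ha0
    have h3 : H * (a + b) ≤ 2 * H * max a b := by
      nlinarith [le_max_left a b, le_max_right a b]
    have h4 : (H * (a + b)) ^ p ≤ (2 * H * max a b) ^ p :=
      rpow_le_rpow (by positivity) h3 hp0.le
    have h5 : (2 * H * max a b) ^ p = (2 * H) ^ p * (max a b) ^ p :=
      mul_rpow (by linarith) hmax0
    have h6 : (max a b) ^ p ≤ a ^ p + b ^ p := by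
      rcases le_total a b with h | h
      · rw [max_eq_right h]
        exact le_add_of_nonneg_left (rpow_nonneg ha0 _)
      · rw [max_eq_left h]
        exact le_add_of_nonneg_right (rpow_nonneg hb0 _)
    have hap : a ^ p = s ^ q := by
      rw [ha, ← Real.rpow_mul hs.1.le]
    have hbp : b ^ p = |s - t| ^ q := by
      rw [hb, ← Real.rpow_mul (abs_nonneg _)]
    calc |H * (a - Real.sign (s - t) * b)| ^ p ≤ (2 * H * max a b) ^ p := h2.trans h4
      _ = (2 * H) ^ p * (max a b) ^ p := h5
      _ ≤ (2 * H) ^ p * (a ^ p + b ^ p) := by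
          exact mul_le_mul_of_nonneg_left h6 hC0
      _ = g s := by rw [hgdef, hap, hbp]
  -- integrability of the majorant
  have hJ1 : IntervalIntegrable (fun s : ℝ => s ^ q) volume 0 T :=
    intervalIntegral.intervalIntegrable_rpow' hq1
  have hJa : IntervalIntegrable (fun s : ℝ => |s - t| ^ q) volume 0 t := by
    have base : IntervalIntegrable (fun u : ℝ => u ^ q) volume 0 t :=
      intervalIntegral.intervalIntegrable_rpow' hq1
    have h' : IntervalIntegrable (fun x : ℝ => (t - x) ^ q) volume 0 t := by
      simpa using (base.comp_sub_left t).symm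
    rw [intervalIntegrable_iff_integrableOn_Ioc_of_le ht0] at h' ⊢
    refine h'.congr_fun (fun x hx => ?_) measurableSet_Ioc
    rw [abs_sub_comm, abs_of_nonneg (by linarith [hx.2])]
  have hJb : IntervalIntegrable (fun s : ℝ => |s - t| ^ q) volume t T := by
    have base : IntervalIntegrable (fun u : ℝ => u ^ q) volume 0 (T - t) :=
      intervalIntegral.intervalIntegrable_rpow' hq1
    have h' : IntervalIntegrable (fun x : ℝ => (x - t) ^ q) volume t T := by
      simpa using base.comp_sub_right t
    rw [intervalIntegrable_iff_integrableOn_Ioc_of_le htT] at h' ⊢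
    refine h'.congr_fun (fun x hx => ?_) measurableSet_Ioc
    rw [abs_of_nonneg (by linarith [hx.1])]
  have hJ2 : IntervalIntegrable (fun s : ℝ => |s - t| ^ q) volume 0 T := hJa.trans hJb
  have hInt : IntegrableOn g (Set.Ioo 0 T) volume := by
    have h1 : IntegrableOn (fun s : ℝ => s ^ q + |s - t| ^ q) (Set.Ioc 0 T) volume := by
      have := ((intervalIntegrable_iff_integrableOn_Ioc_of_le hT.le).mp hJ1).add
        ((intervalIntegrable_iff_integrableOn_Ioc_of_le hT.le).mp hJ2)
      exact this
    exact ((h1.mono_set Set.Ioo_subset_Ioc_self).const_mul _)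
  have hnn : 0 ≤ᵐ[volume.restrict (Set.Ioo 0 T)] g := by
    refine (ae_restrict_iff' measurableSet_Ioo).2 (Filter.Eventually.of_forall fun s hs => ?_)
    have : (0:ℝ) ≤ s ^ q + |s - t| ^ q :=
      add_nonneg (rpow_nonneg hs.1.le _) (rpow_nonneg (abs_nonneg _) _)
    exact mul_nonneg hC0 this
  -- value computations
  have v1 : ∫ s in (0:ℝ)..T, s ^ q = T ^ (q + 1) / (q + 1) := by
    rw [integral_rpow (Or.inl hq1), Real.zero_rpow (ne_of_gt hq1'), sub_zero]
  have v2 : ∫ s in (0:ℝ)..t, |s - t| ^ q = t ^ (q + 1) / (q + 1) := by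
    have hcongr : ∫ s in (0:ℝ)..t, |s - t| ^ q = ∫ s in (0:ℝ)..t, (t - s) ^ q := by
      refine intervalIntegral.integral_congr (fun x hx => ?_)
      rw [Set.uIcc_of_le ht0] at hx
      rw [abs_sub_comm, abs_of_nonneg (by linarith [hx.2])]
    rw [hcongr, intervalIntegral.integral_comp_sub_left (fun u : ℝ => u ^ q) t, sub_self,
      sub_zero, integral_rpow (Or.inl hq1), Real.zero_rpow (ne_of_gt hq1'), sub_zero]
  have v3 : ∫ s in t..T, |s - t| ^ q = (T - t) ^ (q + 1) / (q + 1) := by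
    have hcongr : ∫ s in t..T, |s - t| ^ q = ∫ s in t..T, (s - t) ^ q := by
      refine intervalIntegral.integral_congr (fun x hx => ?_)
      rw [Set.uIcc_of_le htT] at hx
      rw [abs_of_nonneg (by linarith [hx.1])]
    rw [hcongr, intervalIntegral.integral_comp_sub_right (fun u : ℝ => u ^ q) t, sub_self,
      integral_rpow (Or.inl hq1), Real.zero_rpow (ne_of_gt hq1'), sub_zero]
  have v23 : ∫ s in (0:ℝ)..T, |s - t| ^ q
      = t ^ (q + 1) / (q + 1) + (T - t) ^ (q + 1) / (q + 1) := by
    rw [← v2, ← v3]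
    exact (intervalIntegral.integral_add_adjacent_intervals hJa hJb).symm
  -- bound the integral of the majorant
  have hbound : ∫ s in Set.Ioo (0:ℝ) T, g s ≤ (2 * H) ^ p * (3 * (T ^ (q + 1) / (q + 1))) := by
    have heq : ∫ s in Set.Ioo (0:ℝ) T, g s
        = (2 * H) ^ p * ((∫ s in (0:ℝ)..T, s ^ q) + ∫ s in (0:ℝ)..T, |s - t| ^ q) := by
      rw [← integral_Ioc_eq_integral_Ioo, ← intervalIntegral.integral_of_le hT.le, hgdef]
      rw [intervalIntegral.integral_const_mul, intervalIntegral.integral_add hJ1 hJ2]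
    rw [heq, v1, v23]
    have hb1 : t ^ (q + 1) ≤ T ^ (q + 1) := rpow_le_rpow ht0 htT hq1'.le
    have hb2 : (T - t) ^ (q + 1) ≤ T ^ (q + 1) :=
      rpow_le_rpow (by linarith) (by linarith) hq1'.le
    have : T ^ (q + 1) / (q + 1) + (t ^ (q + 1) / (q + 1) + (T - t) ^ (q + 1) / (q + 1))
        ≤ 3 * (T ^ (q + 1) / (q + 1)) := by
      have h3 : 3 * (T ^ (q + 1) / (q + 1)) = (3 * T ^ (q + 1)) / (q + 1) := by ring
      rw [← add_div, ← add_div, h3]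
      gcongr
      linarith
    exact mul_le_mul_of_nonneg_left this hC0
  calc (∫⁻ s in Set.Ioo (0:ℝ) T,
        ENNReal.ofReal (|H * (s ^ (2 * H - 1) - Real.sign (s - t) * |s - t| ^ (2 * H - 1))| ^ p))
      ≤ ∫⁻ s in Set.Ioo (0:ℝ) T, ENNReal.ofReal (g s) :=
        setLIntegral_mono' measurableSet_Ioo hpt
    _ = ENNReal.ofReal (∫ s in Set.Ioo (0:ℝ) T, g s) :=
        (ofReal_integral_eq_lintegral_ofReal hInt hnn).symm
    _ ≤ ENNReal.ofReal ((2 * H) ^ p * (3 * (T ^ (q + 1) / (q + 1)))) :=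
        ENNReal.ofReal_le_ofReal hbound
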